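/- Representer Theorem: any minimizer f* of the regularized empirical risk J(f) = Σ_{i=1}^n L(y_i, f(x_i)) + λ‖f‖²_H over an RKHS H (with λ > 0) lies in the span of the kernel sections at the training points, i.e., f* = Σ_{i=1}^n α_i k(x_i, ·) for some real α_1,…,α_n. -/

import Mathlib

theorem representer_theorem
    {X : Type*} {H : Type*} [NormedAddCommGroup H] [InnerProductSpace ℝ H]
    [CompleteSpace H]
    (ev : H → X → ℝ) (Ksec : X → H)
    (hrepr : ∀ (f : H) (x : X), ev f x = inner ℝ f (Ksec x))
    {n : ℕ} (x : Fin n → X) (y : Fin n → ℝ)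
    (L : ℝ → ℝ → ℝ) (hL : ∀ a b : ℝ, 0 ≤ L a b)
    (lam : ℝ) (hlam : 0 < lam)
    (fstar : H)
    (hmin : ∀ f : H,
      (∑ i, L (y i) (ev fstar (x i))) + lam * ‖fstar‖ ^ 2 ≤
      (∑ i, L (y i) (ev f (x i))) + lam * ‖f‖ ^ 2) :
    ∃ α : Fin n → ℝ, fstar = ∑ i, α i • Ksec (x i) := by
  set K : Submodule ℝ H := Submodule.span ℝ (Set.range fun i => Ksec (x i)) with hK
  haveI : FiniteDimensional ℝ K := FiniteDimensional.span_of_finite ℝ (Set.finite_range _)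
  set g : H := (K.orthogonalProjectionOnto fstar : H) with hg
  have hgK : g ∈ K := (K.orthogonalProjectionOnto fstar).2
  have horth : fstar - g ∈ Kᗮ := Submodule.sub_starProjection_mem_orthogonal (K := K) fstar
  have heval : ∀ i, ev g (x i) = ev fstar (x i) := by
    intro i
    have hmem : Ksec (x i) ∈ K := Submodule.subset_span ⟨i, rfl⟩
    have h0 : (inner ℝ (fstar - g) (Ksec (x i)) : ℝ) = 0 :=
      (Submodule.mem_orthogonal' K _).mp horth _ hmem
    rw [inner_sub_left] at h0
    rw [hrepr, hrepr]
    linarith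
  have hpyth : ‖fstar‖ ^ 2 = ‖g‖ ^ 2 + ‖fstar - g‖ ^ 2 := by
    have h0 : (inner ℝ g (fstar - g) : ℝ) = 0 :=
      (Submodule.mem_orthogonal K _).mp horth g hgK
    have := norm_add_sq_real g (fstar - g)
    simp only [h0, mul_zero, add_zero] at this
    have h1 : g + (fstar - g) = fstar := by abel
    rw [h1] at this
    linarith
  have hle := hmin g
  have hsum : (∑ i, L (y i) (ev g (x i))) = ∑ i, L (y i) (ev fstar (x i)) := by
    apply Finset.sum_congr rfl
    intro i _
    rw [heval]
  rw [hsum] at hle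
  have hnorm : ‖fstar - g‖ ^ 2 ≤ 0 := by nlinarith
  have : fstar - g = 0 := by
    have := sq_nonneg ‖fstar - g‖
    have h0 : ‖fstar - g‖ ^ 2 = 0 := le_antisymm hnorm this
    have := pow_eq_zero_iff (n := 2) (by norm_num) |>.mp h0
    exact norm_eq_zero.mp this
  have hfK : fstar ∈ K := by
    have : fstar = g := by
      have := sub_eq_zero.mp this; exact this
    rw [this]; exact hgK
  obtain ⟨c, hc⟩ := (Submodule.mem_span_range_iff_exists_fun ℝ).mp hfK
  exact ⟨c, hc.symm⟩
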